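/- The function φ(ρ,m) = |m|²/M(ρ) for M(ρ)>0, φ = 0 if (M(ρ),m)=(0,0), and φ = +∞ otherwise, where M(ρ) = (ρ−α)(β−ρ), is convex in (ρ,m) on ℝ × ℝ. -/

import Mathlib

open Set

private lemma key_ineq (t u1 u2 m1 m2 u : ℝ) (ht0 : 0 ≤ t) (ht1 : t ≤ 1)
    (h1 : 0 ≤ u1) (h2 : 0 ≤ u2) (hm1 : u1 = 0 → m1 = 0) (hm2 : u2 = 0 → m2 = 0)
    (hu : t * u1 + (1 - t) * u2 ≤ u) (hu0 : 0 < u) :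
    (t * m1 + (1 - t) * m2) ^ 2 / u ≤ t * (m1 ^ 2 / u1) + (1 - t) * (m2 ^ 2 / u2) := by
  set r1 := m1 ^ 2 / u1 with hr1
  set r2 := m2 ^ 2 / u2 with hr2
  have hr1n : 0 ≤ r1 := div_nonneg (sq_nonneg _) h1
  have hr2n : 0 ≤ r2 := div_nonneg (sq_nonneg _) h2
  have hmu1 : m1 ^ 2 = r1 * u1 := by
    rcases h1.eq_or_lt with h | h
    · simp [hm1 h.symm, ← h]
    · rw [hr1, div_mul_cancel₀ _ h.ne']
  have hmu2 : m2 ^ 2 = r2 * u2 := by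
    rcases h2.eq_or_lt with h | h
    · simp [hm2 h.symm, ← h]
    · rw [hr2, div_mul_cancel₀ _ h.ne']
  have cross : 2 * (m1 * m2) ≤ r1 * u2 + r2 * u1 := by
    rcases h1.eq_or_lt with h | h
    · have := hm1 h.symm
      simp [this, ← h]
      positivity
    · rcases h2.eq_or_lt with h' | h'
      · have := hm2 h'.symm
        simp [this, ← h']
        positivity
      · have key : (r1 * u2 + r2 * u1 - 2 * (m1 * m2)) * (u1 * u2) = (m1 * u2 - m2 * u1) ^ 2 := by
          linear_combination (-u2 ^ 2) * hmu1 - u1 ^ 2 * hmu2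
        have hpos : 0 < u1 * u2 := mul_pos h h'
        have hkey : 0 * (u1 * u2) ≤ (r1 * u2 + r2 * u1 - 2 * (m1 * m2)) * (u1 * u2) := by
          rw [key, zero_mul]; positivity
        have := le_of_mul_le_mul_right hkey hpos
        linarith
  rw [div_le_iff₀ hu0]
  have h1t : 0 ≤ 1 - t := by linarith
  have step1 : (t * m1 + (1 - t) * m2) ^ 2 ≤ (t * r1 + (1 - t) * r2) * (t * u1 + (1 - t) * u2) := by
    nlinarith [mul_nonneg ht0 h1t, hmu1, hmu2, cross, mul_nonneg (mul_nonneg ht0 h1t) (sub_nonneg.2 cross)]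
  have step2 : (t * r1 + (1 - t) * r2) * (t * u1 + (1 - t) * u2) ≤ (t * r1 + (1 - t) * r2) * u :=
    mul_le_mul_of_nonneg_left hu (by positivity)
  linarith

/-- The extended-real cost `φ(ρ,m) = m²/M(ρ)` if `M(ρ) > 0`, `0` if `(M(ρ),m) = (0,0)`,
`+∞` otherwise, with mobility `M(ρ) = (ρ-α)(β-ρ)`, is convex on `ℝ × ℝ`. -/
theorem stmt_0 (α β : ℝ) (hαβ : α < β)
    (M : ℝ → ℝ) (hM : ∀ ρ, M ρ = (ρ - α) * (β - ρ))
    (φ : ℝ × ℝ → EReal)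
    (hφ : ∀ p, φ p =
      if 0 < M p.1 then ((p.2 ^ 2 / M p.1 : ℝ) : EReal)
      else if M p.1 = 0 ∧ p.2 = 0 then 0 else ⊤) :
    ∀ p q : ℝ × ℝ, ∀ t : ℝ, 0 ≤ t → t ≤ 1 →
      φ (t • p + (1 - t) • q) ≤ (t : EReal) * φ p + ((1 - t : ℝ) : EReal) * φ q := by
  have hnn : ∀ r, (0 : EReal) ≤ φ r := by
    intro r
    rw [hφ]
    split_ifs with h1 h2
    · exact_mod_cast div_nonneg (sq_nonneg _) h1.le
    · exact le_rfl
    · exact le_top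
  have rep : ∀ ρ m : ℝ, φ (ρ, m) ≠ ⊤ →
      0 ≤ M ρ ∧ (M ρ = 0 → m = 0) ∧ φ (ρ, m) = ((m ^ 2 / M ρ : ℝ) : EReal) := by
    intro ρ m h
    rw [hφ] at h ⊢
    split_ifs at h ⊢ with h1 h2
    · exact ⟨h1.le, fun he => absurd he (ne_of_gt h1), rfl⟩
    · exact ⟨h2.1.ge, fun _ => h2.2, by
        simp [show M ρ = 0 from h2.1, show m = 0 from h2.2]⟩
    · exact absurd rfl h
  intro p q t ht0 ht1
  obtain ⟨ρ1, m1⟩ := p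
  obtain ⟨ρ2, m2⟩ := q
  rcases ht0.eq_or_lt with h0 | h0
  · subst h0
    norm_num
  rcases ht1.eq_or_lt with h1 | h1
  · subst h1
    norm_num
  -- 0 < t < 1
  have h1t : (0:ℝ) < 1 - t := by linarith
  by_cases hp : φ (ρ1, m1) = ⊤
  · have : (t : EReal) * φ (ρ1, m1) = ⊤ := by
      rw [hp]
      exact EReal.mul_top_of_pos (by exact_mod_cast h0)
    rw [this]
    have hq : ((1 - t : ℝ) : EReal) * φ (ρ2, m2) ≠ ⊥ := by
      intro hbot
      have := mul_nonneg (by exact_mod_cast h1t.le : (0:EReal) ≤ ((1-t:ℝ):EReal)) (hnn (ρ2, m2))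
      rw [hbot] at this
      exact absurd this (by simp)
    rw [EReal.top_add_of_ne_bot hq]
    exact le_top
  by_cases hq : φ (ρ2, m2) = ⊤
  · have : ((1 - t : ℝ) : EReal) * φ (ρ2, m2) = ⊤ := by
      rw [hq]
      exact EReal.mul_top_of_pos (by exact_mod_cast h1t)
    rw [this]
    have hp' : (t : EReal) * φ (ρ1, m1) ≠ ⊥ := by
      intro hbot
      have := mul_nonneg (by exact_mod_cast h0.le : (0:EReal) ≤ (t:EReal)) (hnn (ρ1, m1))
      rw [hbot] at this
      exact absurd this (by simp)
    rw [EReal.add_top_of_ne_bot hp']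
    exact le_top
  obtain ⟨hM1, hm1, hφ1⟩ := rep ρ1 m1 hp
  obtain ⟨hM2, hm2, hφ2⟩ := rep ρ2 m2 hq
  -- the convex combination point
  have hpt : (t • (ρ1, m1) + (1 - t) • (ρ2, m2) : ℝ × ℝ)
      = (t * ρ1 + (1 - t) * ρ2, t * m1 + (1 - t) * m2) := by
    simp [Prod.ext_iff, smul_eq_mul]
  set ρ := t * ρ1 + (1 - t) * ρ2 with hρ
  set m := t * m1 + (1 - t) * m2 with hm'
  have hconc : t * M ρ1 + (1 - t) * M ρ2 ≤ M ρ := by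
    rw [hM, hM, hM, hρ]
    nlinarith [mul_nonneg h0.le h1t.le, sq_nonneg (ρ1 - ρ2)]
  rw [hpt, hφ1, hφ2]
  rcases eq_or_lt_of_le (le_trans (by positivity) hconc : (0:ℝ) ≤ M ρ) with hu0 | hu0
  · -- M ρ = 0, forces everything 0
    have hu1 : M ρ1 = 0 := by nlinarith [mul_nonneg h0.le hM1, mul_nonneg h1t.le hM2]
    have hu2 : M ρ2 = 0 := by nlinarith [mul_nonneg h0.le hM1, mul_nonneg h1t.le hM2]
    have hmm1 := hm1 hu1
    have hmm2 := hm2 hu2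
    rw [hφ, if_neg, if_pos]
    · simp [hu1, hu2, hmm1, hmm2]
    · constructor
      · exact hu0.symm
      · simp [hm', hmm1, hmm2]
    · simp [← hu0]
  · rw [hφ, if_pos hu0]
    have keyr := key_ineq t (M ρ1) (M ρ2) m1 m2 (M ρ) ht0 ht1 hM1 hM2 hm1 hm2 hconc hu0
    calc ((m ^ 2 / M ρ : ℝ) : EReal) ≤ ((t * (m1 ^ 2 / M ρ1) + (1 - t) * (m2 ^ 2 / M ρ2) : ℝ) : EReal) := by
          exact_mod_cast keyr
      _ = (t : EReal) * ((m1 ^ 2 / M ρ1 : ℝ) : EReal) + ((1 - t : ℝ) : EReal) * ((m2 ^ 2 / M ρ2 : ℝ) : EReal) := by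
          rw [EReal.coe_add, EReal.coe_mul, EReal.coe_mul]
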